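/- Suppose |F| ≥ 3 or n ≥ 4. Let A_1 = (p_1, H_1) and A_2 = (p_2, H_2) be distinct point-hyperplane anti-flags that are not 4-adjacent. Then for every point p with p ≠ p_1 and p ≠ p_2 there exists an anti-flag (p', H') that is 4-adjacent to both A_1 and A_2 and satisfies p ⊆ H'. -/

import Mathlib

open Module Submodule LinearMap

section Helpers

variable {F : Type*} [Field F] {V : Type*} [AddCommGroup V] [Module F V]

lemma exists_scalar (h : 3 ≤ Cardinal.mk F) : ∃ c : F, c ≠ 0 ∧ c ≠ 1 := by
  by_contra hc
  push_neg at hc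
  have huniv : (Set.univ : Set F) = {0, 1} := by
    ext c
    simp only [Set.mem_univ, Set.mem_insert_iff, Set.mem_singleton_iff, true_iff]
    rcases eq_or_ne c 0 with h0 | h0
    · exact Or.inl h0
    · exact Or.inr (hc c h0)
  have h2 : Cardinal.mk F ≤ 2 := by
    calc Cardinal.mk F = Cardinal.mk (Set.univ : Set F) := (Cardinal.mk_univ).symm
    _ = Cardinal.mk ({0, 1} : Set F) := by rw [huniv]
    _ ≤ Cardinal.mk ({1} : Set F) + 1 := Cardinal.mk_insert_le
    _ = 2 := by rw [Cardinal.mk_singleton]; norm_num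
  have : (3 : Cardinal) ≤ 2 := h.trans h2
  norm_num at this

lemma exists_notMem' {W : Submodule F V} (h : W ≠ ⊤) : ∃ x, x ∉ W := by
  by_contra hx
  push_neg at hx
  exact h (Submodule.eq_top_iff'.mpr hx)

lemma mem_of_smul_mem' {W : Submodule F V} {a : V} {d : F} (hd : d ≠ 0) (h : d • a ∈ W) :
    a ∈ W := by
  have := W.smul_mem d⁻¹ h
  rwa [smul_smul, inv_mul_cancel₀ hd, one_smul] at this

lemma two_avoid {W1 W2 : Submodule F V} (h1 : W1 ≠ ⊤) (h2 : W2 ≠ ⊤) :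
    ∃ v, v ∉ W1 ∧ v ∉ W2 := by
  obtain ⟨a, ha⟩ := exists_notMem' h1
  obtain ⟨b, hb⟩ := exists_notMem' h2
  by_cases hab : a ∈ W2
  · by_cases hba : b ∈ W1
    · refine ⟨a + b, fun h => ha ?_, fun h => hb ?_⟩
      · have := W1.sub_mem h hba; simpa using this
      · have := W2.sub_mem h hab; simpa [add_comm] using this
    · exact ⟨b, hba, hb⟩
  · exact ⟨a, ha, hab⟩

lemma span_eq_of_mem' {u a : V} (hu : u ∈ span F {a}) (h0 : u ≠ 0) :
    span F {u} = span F {a} := by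
  obtain ⟨c, hc⟩ := mem_span_singleton.mp hu
  have hc0 : c ≠ 0 := by rintro rfl; rw [← hc] at h0; simp at h0
  apply le_antisymm
  · rw [span_singleton_le_iff_mem]; exact hu
  · rw [span_singleton_le_iff_mem, mem_span_singleton]
    exact ⟨c⁻¹, by rw [← hc, smul_smul, inv_mul_cancel₀ hc0, one_smul]⟩

lemma three_avoid (hF : 3 ≤ Cardinal.mk F) {W1 W2 W3 : Submodule F V}
    (h1 : W1 ≠ ⊤) (h2 : W2 ≠ ⊤) (h3 : W3 ≠ ⊤) :
    ∃ v, v ∉ W1 ∧ v ∉ W2 ∧ v ∉ W3 := by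
  obtain ⟨c, hc0, hc1⟩ := exists_scalar hF
  obtain ⟨a, ha1, ha2⟩ := two_avoid h1 h2
  by_cases ha3 : a ∈ W3
  swap
  · exact ⟨a, ha1, ha2, ha3⟩
  obtain ⟨b, hb⟩ := exists_notMem' h3
  have hcand3 : ∀ t : F, b + t • a ∉ W3 := by
    intro t h
    exact hb (by simpa using W3.sub_mem h (W3.smul_mem t ha3))
  have key : ∀ {W : Submodule F V}, a ∉ W → ∀ s t : F, s ≠ t →
      b + s • a ∈ W → b + t • a ∈ W → False := by
    intro W haW s t hst hs ht
    have hd : (s - t) • a ∈ W := by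
      have := W.sub_mem hs ht
      simpa [sub_smul] using this
    exact haW (mem_of_smul_mem' (sub_ne_zero.mpr hst) hd)
  by_cases k0 : b + (0:F) • a ∈ W1 ∨ b + (0:F) • a ∈ W2
  · by_cases k1 : b + (1:F) • a ∈ W1 ∨ b + (1:F) • a ∈ W2
    · by_cases kc : b + c • a ∈ W1 ∨ b + c • a ∈ W2
      · exfalso
        rcases k0 with k0 | k0 <;> rcases k1 with k1 | k1 <;> rcases kc with kc | kc
        · exact key ha1 0 1 (by norm_num) k0 k1
        · exact key ha1 0 1 (by norm_num) k0 k1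
        · exact key ha1 0 c (Ne.symm hc0) k0 kc
        · exact key ha2 1 c (Ne.symm hc1) k1 kc
        · exact key ha1 1 c (Ne.symm hc1) k1 kc
        · exact key ha2 0 c (Ne.symm hc0) k0 kc
        · exact key ha2 0 1 (by norm_num) k0 k1
        · exact key ha2 0 1 (by norm_num) k0 k1
      · push_neg at kc
        exact ⟨b + c • a, kc.1, kc.2, hcand3 c⟩
    · push_neg at k1
      exact ⟨b + (1:F) • a, k1.1, k1.2, hcand3 1⟩
  · push_neg at k0
    exact ⟨b + (0:F) • a, k0.1, k0.2, hcand3 0⟩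

set_option linter.unusedSectionVars false

variable [FiniteDimensional F V]

lemma line_ne_top (hdim : 2 ≤ finrank F V) (y : V) : span F {y} ≠ ⊤ := by
  intro h
  have h1 : finrank F (span F {y}) ≤ 1 := by
    by_cases hy : y = 0
    · subst hy
      rw [Submodule.span_zero_singleton]
      simp
    · rw [finrank_span_singleton hy]
  rw [h, finrank_top] at h1
  omega

lemma tool (hdim : 2 ≤ finrank F V) (hcard : 3 ≤ Cardinal.mk F ∨ 3 ≤ finrank F V)
    {W1 W2 : Submodule F V} (h1 : W1 ≠ ⊤) (h2 : W2 ≠ ⊤) (x : V) :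
    ∃ v, v ∉ W1 ∧ v ∉ W2 ∧ v ∉ span F {x} := by
  rcases hcard with hF | hdim3
  · exact three_avoid hF h1 h2 (line_ne_top hdim x)
  obtain ⟨u, hu1, hu2⟩ := two_avoid h1 h2
  by_cases hux : u ∈ span F {x}
  swap
  · exact ⟨u, hu1, hu2, hux⟩
  have hu0 : u ≠ 0 := fun h => hu1 (h ▸ W1.zero_mem)
  have hxu : span F {x} = span F {u} := (span_eq_of_mem' hux hu0).symm
  rw [hxu]
  have inf1 : ∀ z ∈ W1, z ∈ span F {u} → z = 0 := by
    intro z hzW hzu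
    obtain ⟨c, hc⟩ := mem_span_singleton.mp hzu
    rcases eq_or_ne c 0 with rfl | hc0
    · rw [← hc, zero_smul]
    · exact absurd (mem_of_smul_mem' hc0 (hc ▸ hzW)) hu1
  have inf2 : ∀ z ∈ W2, z ∈ span F {u} → z = 0 := by
    intro z hzW hzu
    obtain ⟨c, hc⟩ := mem_span_singleton.mp hzu
    rcases eq_or_ne c 0 with rfl | hc0
    · rw [← hc, zero_smul]
    · exact absurd (mem_of_smul_mem' hc0 (hc ▸ hzW)) hu2
  by_cases hK : ∃ z, z ∈ W1 ⊓ W2 ∧ z ∉ span F {u}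
  · obtain ⟨z, hzK, hz⟩ := hK
    obtain ⟨hz1, hz2⟩ := Submodule.mem_inf.mp hzK
    refine ⟨u + z, fun h => hu1 ?_, fun h => hu2 ?_, fun h => hz ?_⟩
    · have := W1.sub_mem h hz1; simpa using this
    · have := W2.sub_mem h hz2; simpa using this
    · have := Submodule.sub_mem _ h (mem_span_singleton_self u); simpa using this
  push_neg at hK
  have hKbot : ∀ z, z ∈ W1 ⊓ W2 → z = 0 := fun z hz =>
    inf1 z (Submodule.mem_inf.mp hz).1 (hK z hz)
  by_cases hW1bot : W1 = ⊥
  · obtain ⟨v, hv2, hvu⟩ := two_avoid h2 (line_ne_top hdim u)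
    refine ⟨v, ?_, hv2, hvu⟩
    rw [hW1bot, Submodule.mem_bot]
    rintro rfl
    exact hvu (zero_mem _)
  by_cases hW2bot : W2 = ⊥
  · obtain ⟨v, hv1, hvu⟩ := two_avoid h1 (line_ne_top hdim u)
    refine ⟨v, hv1, ?_, hvu⟩
    rw [hW2bot, Submodule.mem_bot]
    rintro rfl
    exact hvu (zero_mem _)
  obtain ⟨z1, hz1W, hz1⟩ := (Submodule.ne_bot_iff W1).mp hW1bot
  obtain ⟨z2, hz2W, hz2⟩ := (Submodule.ne_bot_iff W2).mp hW2bot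
  by_cases hA : ∃ z, z ∈ W1 ∧ z ≠ 0 ∧ u + z ∉ W2
  · obtain ⟨z, hzW, hz0, hzB⟩ := hA
    refine ⟨u + z, fun h => hu1 ?_, hzB, fun h => ?_⟩
    · have := W1.sub_mem h hzW; simpa using this
    · have hzu : z ∈ span F {u} := by
        have := Submodule.sub_mem _ h (mem_span_singleton_self u); simpa using this
      exact hz0 (inf1 z hzW hzu)
  by_cases hB : ∃ z, z ∈ W2 ∧ z ≠ 0 ∧ u + z ∉ W1
  · obtain ⟨z, hzW, hz0, hzB⟩ := hB
    refine ⟨u + z, hzB, fun h => hu2 ?_, fun h => ?_⟩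
    · have := W2.sub_mem h hzW; simpa using this
    · have hzu : z ∈ span F {u} := by
        have := Submodule.sub_mem _ h (mem_span_singleton_self u); simpa using this
      exact hz0 (inf2 z hzW hzu)
  push_neg at hA hB
  have hW1sing : ∀ z, z ∈ W1 → z ≠ 0 → z = z1 := by
    intro z hzW hz0
    have e1 := hA z hzW hz0
    have e2 := hA z1 hz1W hz1
    have hd : z - z1 ∈ W1 ⊓ W2 := by
      refine Submodule.mem_inf.mpr ⟨W1.sub_mem hzW hz1W, ?_⟩
      have := W2.sub_mem e1 e2; simpa using this
    have := hKbot _ hd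
    exact sub_eq_zero.mp this
  have hW2sing : ∀ z, z ∈ W2 → z ≠ 0 → z = z2 := by
    intro z hzW hz0
    have e1 := hB z hzW hz0
    have e2 := hB z2 hz2W hz2
    have hd : z - z2 ∈ W1 ⊓ W2 := by
      refine Submodule.mem_inf.mpr ⟨?_, W2.sub_mem hzW hz2W⟩
      have := W1.sub_mem e1 e2; simpa using this
    exact sub_eq_zero.mp (hKbot _ hd)
  have hz2eq : z2 = u + z1 := by
    have e2 : u + z1 ∈ W2 := hA z1 hz1W hz1
    have h0 : u + z1 ≠ 0 := by
      intro h
      apply hu1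
      have : u = -z1 := by
        have := congrArg (fun t => t - z1) h
        simpa using this
      rw [this]
      exact W1.neg_mem hz1W
    exact (hW2sing _ e2 h0).symm
  have hT : span F ({z1, u} : Set V) ≠ ⊤ := by
    intro h
    have e := Submodule.finrank_sup_add_finrank_inf_eq (span F {z1}) (span F {u})
    have l1 : finrank F (span F ({z1} : Set V)) ≤ 1 := by rw [finrank_span_singleton hz1]
    have l2 : finrank F (span F ({u} : Set V)) ≤ 1 := by rw [finrank_span_singleton hu0]
    have hsp : span F ({z1, u} : Set V) = span F {z1} ⊔ span F {u} := by
      rw [← Submodule.span_insert]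
    rw [hsp] at h
    rw [h, finrank_top] at e
    omega
  obtain ⟨s, hs⟩ := exists_notMem' hT
  have hz1T : z1 ∈ span F ({z1, u} : Set V) := subset_span (by simp)
  have huT : u ∈ span F ({z1, u} : Set V) := subset_span (by simp)
  refine ⟨s, fun h => ?_, fun h => ?_, fun h => ?_⟩
  · rcases eq_or_ne s 0 with rfl | hs0
    · exact hs (zero_mem _)
    · exact hs ((hW1sing s h hs0) ▸ hz1T)
  · rcases eq_or_ne s 0 with rfl | hs0
    · exact hs (zero_mem _)
    · apply hs
      rw [hW2sing s h hs0, hz2eq]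
      exact add_mem huT hz1T
  · obtain ⟨c, hc⟩ := mem_span_singleton.mp h
    exact hs (hc ▸ smul_mem _ c huT)

lemma pick_t {c : F} (hc0 : c ≠ 0) (hc1 : c ≠ 1) (A B : F) (hA : A ≠ 0) :
    ∃ t : F, t ≠ 0 ∧ A + t * B ≠ 0 := by
  by_cases hB : B = 0
  · exact ⟨1, one_ne_zero, by simpa [hB]⟩
  by_cases h1 : A + B = 0
  · refine ⟨c, hc0, ?_⟩
    have hBA : B = -A := by
      have := add_eq_zero_iff_eq_neg.mp (by rw [add_comm] at h1; exact h1)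
      exact this
    have : A + c * B = A * (1 - c) := by rw [hBA]; ring
    rw [this]
    exact mul_ne_zero hA (sub_ne_zero.mpr (Ne.symm hc1))
  · exact ⟨1, one_ne_zero, by simpa using h1⟩

lemma eq_smul_of_ker_le {φ ψ : Module.Dual F V} {b : V} (hb : ψ b ≠ 0)
    (h : ker ψ ≤ ker φ) : ∃ c : F, φ = c • ψ := by
  refine ⟨φ b * (ψ b)⁻¹, ?_⟩
  ext x
  have hx : x - (ψ x * (ψ b)⁻¹) • b ∈ ker ψ := by
    rw [mem_ker, map_sub, map_smul, smul_eq_mul, mul_assoc, inv_mul_cancel₀ hb, mul_one, sub_self]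
  have hφ := h hx
  rw [mem_ker, map_sub, map_smul, sub_eq_zero, smul_eq_mul] at hφ
  rw [hφ]
  simp only [LinearMap.smul_apply, smul_eq_mul]
  ring

lemma dual_sep [FiniteDimensional F V] {w : V} (y : V) (hy : y ∉ span F {w}) :
    ∃ φ : Module.Dual F V, φ w = 0 ∧ φ y ≠ 0 := by
  set S := span F ({w} : Set V) with hS
  have hy' : S.mkQ y ≠ 0 := by
    rw [Submodule.mkQ_apply, ne_eq, Submodule.Quotient.mk_eq_zero]
    exact hy
  obtain ⟨ψ, hψ⟩ : ∃ ψ : Module.Dual F (V ⧸ S), ψ (S.mkQ y) ≠ 0 := by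
    by_contra h
    push_neg at h
    exact hy' ((Module.forall_dual_apply_eq_zero_iff F _).mp h)
  refine ⟨ψ.comp S.mkQ, ?_, by simpa using hψ⟩
  have hw : S.mkQ w = 0 := by
    rw [Submodule.mkQ_apply, Submodule.Quotient.mk_eq_zero]
    exact mem_span_singleton_self w
  simp [hw]

variable [FiniteDimensional F V]

lemma finrank_ker_funct {ψ : Module.Dual F V} {b : V} (hb : ψ b ≠ 0) :
    finrank F (ker ψ) + 1 = finrank F V := by
  have hsurj : Function.Surjective ψ := by
    intro cc
    exact ⟨(cc * (ψ b)⁻¹) • b, by rw [map_smul, smul_eq_mul, mul_assoc, inv_mul_cancel₀ hb, mul_one]⟩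
  have hr : range ψ = ⊤ := range_eq_top.mpr hsurj
  have h := ψ.finrank_range_add_finrank_ker
  rw [hr, finrank_top, Module.finrank_self] at h
  omega

lemma finrank_inf_ge (A B : Submodule F V) :
    finrank F A + finrank F B ≤ finrank F V + finrank F (A ⊓ B : Submodule F V) := by
  have h1 := Submodule.finrank_sup_add_finrank_inf_eq A B
  have h2 : finrank F (A ⊔ B : Submodule F V) ≤ finrank F V := Submodule.finrank_le _
  omega

lemma exists_ne_zero_of_finrank {S : Submodule F V} (h : 1 ≤ finrank F S) :
    ∃ z ∈ S, z ≠ 0 := by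
  have hS : S ≠ ⊥ := by
    intro hb
    rw [hb, finrank_bot] at h
    omega
  exact (Submodule.ne_bot_iff S).mp hS

lemma exists_notMem_line_of_notMem {S : Submodule F V} {u : V}
    (hS : 1 ≤ finrank F S) (hu : u ∉ S) : ∃ y ∈ S, y ∉ span F {u} := by
  by_contra h
  push_neg at h
  have hz : ∀ z ∈ S, z = 0 := by
    intro z hzS
    obtain ⟨c, hc⟩ := mem_span_singleton.mp (h z hzS)
    rcases eq_or_ne c 0 with rfl | hc0
    · rw [← hc, zero_smul]
    · exact absurd (mem_of_smul_mem' hc0 (hc ▸ hzS)) hu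
  have : S = ⊥ := by
    rw [eq_bot_iff]
    intro z hzS
    rw [Submodule.mem_bot]
    exact hz z hzS
  rw [this, finrank_bot] at hS
  omega

lemma exists_notMem_line_of_finrank {S : Submodule F V} (x : V)
    (hS : 2 ≤ finrank F S) : ∃ y ∈ S, y ∉ span F {x} := by
  by_contra h
  push_neg at h
  have hle : S ≤ span F {x} := h
  have h1 : finrank F S ≤ finrank F (span F ({x} : Set V)) := Submodule.finrank_mono hle
  have h2 : finrank F (span F ({x} : Set V)) ≤ 1 := by
    by_cases hx : x = 0
    · subst hx; rw [Submodule.span_zero_singleton]; simp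
    · rw [finrank_span_singleton hx]
  omega

lemma hyp_funct (H : Submodule F V) (hH : finrank F H + 1 = finrank F V) :
    ∃ (φ : Module.Dual F V) (b : V), φ b ≠ 0 ∧ ker φ = H := by
  have hne : H ≠ ⊤ := by
    intro h
    rw [h, finrank_top] at hH
    omega
  obtain ⟨y, hy⟩ := exists_notMem' hne
  have hy' : H.mkQ y ≠ 0 := by
    rw [Submodule.mkQ_apply, ne_eq, Submodule.Quotient.mk_eq_zero]
    exact hy
  obtain ⟨ψ, hψ⟩ : ∃ ψ : Module.Dual F (V ⧸ H), ψ (H.mkQ y) ≠ 0 := by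
    by_contra h
    push_neg at h
    exact hy' ((Module.forall_dual_apply_eq_zero_iff F _).mp h)
  have hq : finrank F (V ⧸ H) = 1 := by
    have := Submodule.finrank_quotient_add_finrank H
    omega
  have hkψ : ker ψ = ⊥ := by
    have hlt : ker ψ < ⊤ := lt_top_iff_ne_top.mpr (fun h => hψ (by
      have : H.mkQ y ∈ ker ψ := by rw [h]; trivial
      exact mem_ker.mp this))
    have hfr := Submodule.finrank_lt hlt.ne
    rw [hq] at hfr
    have : finrank F (ker ψ) = 0 := by omega
    exact Submodule.finrank_eq_zero.mp this
  refine ⟨ψ.comp H.mkQ, y, by simpa using hψ, ?_⟩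
  rw [LinearMap.ker_comp, hkψ, Submodule.comap_bot, Submodule.ker_mkQ]

lemma point_rep {p : Submodule F V} (hp : finrank F p = 1) :
    ∃ v : V, v ≠ 0 ∧ p = span F {v} := by
  have hpb : p ≠ ⊥ := by
    intro h
    rw [h, finrank_bot] at hp
    omega
  obtain ⟨v, hv, hv0⟩ := (Submodule.ne_bot_iff p).mp hpb
  refine ⟨v, hv0, ?_⟩
  have hle : span F {v} ≤ p := (span_singleton_le_iff_mem v p).mpr hv
  refine (Submodule.eq_of_le_of_finrank_le hle ?_).symm
  rw [hp, finrank_span_singleton hv0]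

end Helpers

section LemV

set_option linter.unusedSectionVars false

variable {F : Type*} [Field F] {V : Type*} [AddCommGroup V] [Module F V] [FiniteDimensional F V]

open Module Submodule LinearMap

lemma notMem_span_of_apply_ne {ψ : Module.Dual F V} {a : V} (ha : ψ a = 0) {v : V}
    (hv : ψ v ≠ 0) : v ∉ span F {a} := by
  intro h
  obtain ⟨c, hc⟩ := mem_span_singleton.mp h
  apply hv
  rw [← hc, map_smul, ha, smul_zero]

lemma apply_ne_of_mem_span {ψ : Module.Dual F V} {u a : V} (hu : u ∈ span F {a})
    (hψu : ψ u ≠ 0) : ψ a ≠ 0 := by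
  obtain ⟨c, hc⟩ := mem_span_singleton.mp hu
  intro h
  apply hψu
  rw [← hc, map_smul, h, smul_zero]

lemma lemV (hn3 : 3 ≤ finrank F V) (hcard : 3 ≤ Cardinal.mk F ∨ 4 ≤ finrank F V)
    (ψ1 ψ2 ψ3 : Module.Dual F V) (u a1 a2 : V)
    (h1u : ψ1 u ≠ 0) (h2u : ψ2 u ≠ 0) (h3u : ψ3 u ≠ 0)
    (h1a1 : ψ1 a1 ≠ 0) (h2a2 : ψ2 a2 ≠ 0)
    (hD : span F {a1} = span F {a2} ∨ ker ψ1 = ker ψ2 ∨ ψ2 a1 = 0) :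
    ∃ v, ψ1 v ≠ 0 ∧ ψ2 v ≠ 0 ∧ ψ3 v ≠ 0 ∧ v ∉ span F {a1} ∧ v ∉ span F {a2} := by
  have hu0 : u ≠ 0 := fun h => h1u (by rw [h, map_zero])
  have e1 := finrank_ker_funct h1u
  have e2 := finrank_ker_funct h2u
  have e3 := finrank_ker_funct h3u
  rcases hcard with hF | hn4
  · -- Branch A : 3 ≤ |F|
    obtain ⟨c0, hc00, hc01⟩ := exists_scalar hF
    by_cases hua1 : u ∈ span F {a1}
    · -- u ∈ <a1>
      have hspan : span F {u} = span F {a1} := span_eq_of_mem' hua1 hu0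
      have h2a1 : ψ2 a1 ≠ 0 := apply_ne_of_mem_span hua1 h2u
      have h3a1 : ψ3 a1 ≠ 0 := apply_ne_of_mem_span hua1 h3u
      rcases hD with hDs | hDk | hDi
      · -- span eq
        have hfr : 1 ≤ finrank F (ker ψ1 ⊓ ker ψ2 : Submodule F V) := by
          have := finrank_inf_ge (ker ψ1) (ker ψ2)
          omega
        have huS : u ∉ (ker ψ1 ⊓ ker ψ2 : Submodule F V) := fun h =>
          h1u (mem_ker.mp (Submodule.mem_inf.mp h).1)
        obtain ⟨y, hyS, hyu⟩ := exists_notMem_line_of_notMem hfr huS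
        have hy1 : ψ1 y = 0 := mem_ker.mp (Submodule.mem_inf.mp hyS).1
        have hy2 : ψ2 y = 0 := mem_ker.mp (Submodule.mem_inf.mp hyS).2
        obtain ⟨t, ht0, ht3⟩ := pick_t hc00 hc01 (ψ3 u) (ψ3 y) h3u
        have hnot1 : u + t • y ∉ span F {a1} := by
          rw [← hspan]
          intro h
          have : t • y ∈ span F {u} := by
            have := Submodule.sub_mem _ h (mem_span_singleton_self u)
            simpa using this
          exact hyu (mem_of_smul_mem' ht0 this)
        refine ⟨u + t • y, ?_, ?_, ?_, hnot1, hDs ▸ hnot1⟩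
        · rw [map_add, map_smul, hy1, smul_zero, add_zero]; exact h1u
        · rw [map_add, map_smul, hy2, smul_zero, add_zero]; exact h2u
        · rw [map_add, map_smul, smul_eq_mul]; exact ht3
      · -- ker eq
        have hfr : 1 ≤ finrank F (ker ψ1 ⊓ ker ψ3 : Submodule F V) := by
          have := finrank_inf_ge (ker ψ1) (ker ψ3)
          omega
        have huS : u ∉ (ker ψ1 ⊓ ker ψ3 : Submodule F V) := fun h =>
          h1u (mem_ker.mp (Submodule.mem_inf.mp h).1)
        obtain ⟨y, hyS, hyu⟩ := exists_notMem_line_of_notMem hfr huS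
        have hy1 : ψ1 y = 0 := mem_ker.mp (Submodule.mem_inf.mp hyS).1
        have hy3 : ψ3 y = 0 := mem_ker.mp (Submodule.mem_inf.mp hyS).2
        have hy2 : ψ2 y = 0 := by
          have : y ∈ ker ψ2 := hDk ▸ (mem_ker.mpr hy1)
          exact mem_ker.mp this
        have hgen : ∀ t : F, t ≠ 0 →
            ψ1 (u + t • y) ≠ 0 ∧ ψ2 (u + t • y) ≠ 0 ∧ ψ3 (u + t • y) ≠ 0 ∧
            u + t • y ∉ span F {a1} := by
          intro t ht0
          refine ⟨?_, ?_, ?_, ?_⟩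
          · rw [map_add, map_smul, hy1, smul_zero, add_zero]; exact h1u
          · rw [map_add, map_smul, hy2, smul_zero, add_zero]; exact h2u
          · rw [map_add, map_smul, hy3, smul_zero, add_zero]; exact h3u
          · rw [← hspan]
            intro h
            have : t • y ∈ span F {u} := by
              have := Submodule.sub_mem _ h (mem_span_singleton_self u)
              simpa using this
            exact hyu (mem_of_smul_mem' ht0 this)
        by_cases ha12 : span F ({a1} : Set V) = span F {a2}
        · obtain ⟨g1, g2, g3, g4⟩ := hgen 1 one_ne_zero
          exact ⟨u + (1:F) • y, g1, g2, g3, g4, ha12 ▸ g4⟩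
        · have hone : ¬(u + (1:F) • y ∈ span F {a2} ∧ u + c0 • y ∈ span F {a2}) := by
            rintro ⟨m1, mc⟩
            have hyd : ((1:F) - c0) • y ∈ span F {a2} := by
              have := Submodule.sub_mem _ m1 mc
              simpa [sub_smul] using this
            have hy' : y ∈ span F {a2} :=
              mem_of_smul_mem' (sub_ne_zero.mpr (Ne.symm hc01)) hyd
            have hu' : u ∈ span F {a2} := by
              have := Submodule.sub_mem _ m1 (smul_mem _ (1:F) hy')
              simpa using this
            exact ha12 (hspan.symm.trans (span_eq_of_mem' hu' hu0))
          by_cases hba : u + (1:F) • y ∈ span F {a2}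
          · obtain ⟨g1, g2, g3, g4⟩ := hgen c0 hc00
            refine ⟨u + c0 • y, g1, g2, g3, g4, fun h => hone ⟨hba, h⟩⟩
          · obtain ⟨g1, g2, g3, g4⟩ := hgen 1 one_ne_zero
            exact ⟨u + (1:F) • y, g1, g2, g3, g4, hba⟩
      · exact absurd hDi h2a1
    · by_cases hua2 : u ∈ span F {a2}
      · -- u ∈ <a2>, u ∉ <a1>
        have hspan : span F {u} = span F {a2} := span_eq_of_mem' hua2 hu0
        have h1a2 : ψ1 a2 ≠ 0 := apply_ne_of_mem_span hua2 h1u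
        have h3a2 : ψ3 a2 ≠ 0 := apply_ne_of_mem_span hua2 h3u
        rcases hD with hDs | hDk | hDi
        · -- span eq
          have hfr : 1 ≤ finrank F (ker ψ1 ⊓ ker ψ2 : Submodule F V) := by
            have := finrank_inf_ge (ker ψ1) (ker ψ2)
            omega
          have huS : u ∉ (ker ψ1 ⊓ ker ψ2 : Submodule F V) := fun h =>
            h1u (mem_ker.mp (Submodule.mem_inf.mp h).1)
          obtain ⟨y, hyS, hyu⟩ := exists_notMem_line_of_notMem hfr huS
          have hy1 : ψ1 y = 0 := mem_ker.mp (Submodule.mem_inf.mp hyS).1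
          have hy2 : ψ2 y = 0 := mem_ker.mp (Submodule.mem_inf.mp hyS).2
          obtain ⟨t, ht0, ht3⟩ := pick_t hc00 hc01 (ψ3 u) (ψ3 y) h3u
          have hnot2 : u + t • y ∉ span F {a2} := by
            rw [← hspan]
            intro h
            have : t • y ∈ span F {u} := by
              have := Submodule.sub_mem _ h (mem_span_singleton_self u)
              simpa using this
            exact hyu (mem_of_smul_mem' ht0 this)
          refine ⟨u + t • y, ?_, ?_, ?_, hDs ▸ hnot2, hnot2⟩
          · rw [map_add, map_smul, hy1, smul_zero, add_zero]; exact h1u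
          · rw [map_add, map_smul, hy2, smul_zero, add_zero]; exact h2u
          · rw [map_add, map_smul, smul_eq_mul]; exact ht3
        · -- ker eq
          have hfr : 1 ≤ finrank F (ker ψ1 ⊓ ker ψ3 : Submodule F V) := by
            have := finrank_inf_ge (ker ψ1) (ker ψ3)
            omega
          have huS : u ∉ (ker ψ1 ⊓ ker ψ3 : Submodule F V) := fun h =>
            h1u (mem_ker.mp (Submodule.mem_inf.mp h).1)
          obtain ⟨y, hyS, hyu⟩ := exists_notMem_line_of_notMem hfr huS
          have hy1 : ψ1 y = 0 := mem_ker.mp (Submodule.mem_inf.mp hyS).1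
          have hy3 : ψ3 y = 0 := mem_ker.mp (Submodule.mem_inf.mp hyS).2
          have hy2 : ψ2 y = 0 := by
            have : y ∈ ker ψ2 := hDk ▸ (mem_ker.mpr hy1)
            exact mem_ker.mp this
          have hgen : ∀ t : F, t ≠ 0 →
              ψ1 (u + t • y) ≠ 0 ∧ ψ2 (u + t • y) ≠ 0 ∧ ψ3 (u + t • y) ≠ 0 ∧
              u + t • y ∉ span F {a2} := by
            intro t ht0
            refine ⟨?_, ?_, ?_, ?_⟩
            · rw [map_add, map_smul, hy1, smul_zero, add_zero]; exact h1u
            · rw [map_add, map_smul, hy2, smul_zero, add_zero]; exact h2u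
            · rw [map_add, map_smul, hy3, smul_zero, add_zero]; exact h3u
            · rw [← hspan]
              intro h
              have : t • y ∈ span F {u} := by
                have := Submodule.sub_mem _ h (mem_span_singleton_self u)
                simpa using this
              exact hyu (mem_of_smul_mem' ht0 this)
          have hone : ¬(u + (1:F) • y ∈ span F {a1} ∧ u + c0 • y ∈ span F {a1}) := by
            rintro ⟨m1, mc⟩
            have hyd : ((1:F) - c0) • y ∈ span F {a1} := by
              have := Submodule.sub_mem _ m1 mc
              simpa [sub_smul] using this
            have hy' : y ∈ span F {a1} :=
              mem_of_smul_mem' (sub_ne_zero.mpr (Ne.symm hc01)) hyd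
            have hu' : u ∈ span F {a1} := by
              have := Submodule.sub_mem _ m1 (smul_mem _ (1:F) hy')
              simpa using this
            exact hua1 hu'
          by_cases hba : u + (1:F) • y ∈ span F {a1}
          · obtain ⟨g1, g2, g3, g4⟩ := hgen c0 hc00
            refine ⟨u + c0 • y, g1, g2, g3, fun h => hone ⟨hba, h⟩, g4⟩
          · obtain ⟨g1, g2, g3, g4⟩ := hgen 1 one_ne_zero
            exact ⟨u + (1:F) • y, g1, g2, g3, hba, g4⟩
        · -- ψ2 a1 = 0 : <a1> auto-avoided
          have hfr : 1 ≤ finrank F (ker ψ1 ⊓ ker ψ2 : Submodule F V) := by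
            have := finrank_inf_ge (ker ψ1) (ker ψ2)
            omega
          have huS : u ∉ (ker ψ1 ⊓ ker ψ2 : Submodule F V) := fun h =>
            h1u (mem_ker.mp (Submodule.mem_inf.mp h).1)
          obtain ⟨y, hyS, hyu⟩ := exists_notMem_line_of_notMem hfr huS
          have hy1 : ψ1 y = 0 := mem_ker.mp (Submodule.mem_inf.mp hyS).1
          have hy2 : ψ2 y = 0 := mem_ker.mp (Submodule.mem_inf.mp hyS).2
          obtain ⟨t, ht0, ht3⟩ := pick_t hc00 hc01 (ψ3 u) (ψ3 y) h3u
          have hψ2v : ψ2 (u + t • y) ≠ 0 := by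
            rw [map_add, map_smul, hy2, smul_zero, add_zero]; exact h2u
          have hnot2 : u + t • y ∉ span F {a2} := by
            rw [← hspan]
            intro h
            have : t • y ∈ span F {u} := by
              have := Submodule.sub_mem _ h (mem_span_singleton_self u)
              simpa using this
            exact hyu (mem_of_smul_mem' ht0 this)
          refine ⟨u + t • y, ?_, hψ2v, ?_, notMem_span_of_apply_ne hDi hψ2v, hnot2⟩
          · rw [map_add, map_smul, hy1, smul_zero, add_zero]; exact h1u
          · rw [map_add, map_smul, smul_eq_mul]; exact ht3
      · exact ⟨u, h1u, h2u, h3u, hua1, hua2⟩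
  · -- Branch B : 4 ≤ finrank
    rcases hD with hDs | hDk | hDi
    · -- span eq
      have hfr : 1 ≤ finrank F ((ker ψ1 ⊓ ker ψ2) ⊓ ker ψ3 : Submodule F V) := by
        have i1 := finrank_inf_ge (ker ψ1) (ker ψ2)
        have i2 := finrank_inf_ge (ker ψ1 ⊓ ker ψ2) (ker ψ3)
        omega
      obtain ⟨z, hzK, hz0⟩ := exists_ne_zero_of_finrank hfr
      have hz1 : ψ1 z = 0 := mem_ker.mp (Submodule.mem_inf.mp (Submodule.mem_inf.mp hzK).1).1
      have hz2 : ψ2 z = 0 := mem_ker.mp (Submodule.mem_inf.mp (Submodule.mem_inf.mp hzK).1).2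
      have hz3 : ψ3 z = 0 := mem_ker.mp (Submodule.mem_inf.mp hzK).2
      by_cases hua1 : u ∈ span F {a1}
      · have hnot : u + z ∉ span F {a1} := by
          intro h
          have hzm : z ∈ span F {a1} := by
            have := Submodule.sub_mem _ h hua1
            simpa using this
          have ha1m : a1 ∈ ((ker ψ1 ⊓ ker ψ2) ⊓ ker ψ3 : Submodule F V) := by
            obtain ⟨c, hc⟩ := mem_span_singleton.mp hzm
            have hc0 : c ≠ 0 := by rintro rfl; rw [← hc] at hz0; simp at hz0
            exact mem_of_smul_mem' hc0 (hc ▸ hzK)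
          exact h1a1 (mem_ker.mp (Submodule.mem_inf.mp (Submodule.mem_inf.mp ha1m).1).1)
        refine ⟨u + z, ?_, ?_, ?_, hnot, hDs ▸ hnot⟩
        · rw [map_add, hz1, add_zero]; exact h1u
        · rw [map_add, hz2, add_zero]; exact h2u
        · rw [map_add, hz3, add_zero]; exact h3u
      · exact ⟨u, h1u, h2u, h3u, hua1, hDs ▸ hua1⟩
    · -- ker eq
      have hfr2 : 2 ≤ finrank F (ker ψ1 ⊓ ker ψ3 : Submodule F V) := by
        have := finrank_inf_ge (ker ψ1) (ker ψ3)
        omega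
      obtain ⟨z1, hz1K, hz10⟩ := exists_ne_zero_of_finrank (by omega : 1 ≤ finrank F (ker ψ1 ⊓ ker ψ3 : Submodule F V))
      obtain ⟨z2, hz2K, hz2l⟩ := exists_notMem_line_of_finrank z1 hfr2
      have hz20 : z2 ≠ 0 := fun h => hz2l (h ▸ zero_mem _)
      have happly : ∀ d, d ∈ (ker ψ1 ⊓ ker ψ3 : Submodule F V) →
          ψ1 d = 0 ∧ ψ2 d = 0 ∧ ψ3 d = 0 := by
        intro d hd
        have hd1 : ψ1 d = 0 := mem_ker.mp (Submodule.mem_inf.mp hd).1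
        have hd3 : ψ3 d = 0 := mem_ker.mp (Submodule.mem_inf.mp hd).2
        have hd2 : ψ2 d = 0 := mem_ker.mp (hDk ▸ (mem_ker.mpr hd1))
        exact ⟨hd1, hd2, hd3⟩
      have hgood : ∀ d, d ∈ (ker ψ1 ⊓ ker ψ3 : Submodule F V) →
          ψ1 (u + d) ≠ 0 ∧ ψ2 (u + d) ≠ 0 ∧ ψ3 (u + d) ≠ 0 := by
        intro d hd
        obtain ⟨hd1, hd2, hd3⟩ := happly d hd
        refine ⟨?_, ?_, ?_⟩
        · rw [map_add, hd1, add_zero]; exact h1u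
        · rw [map_add, hd2, add_zero]; exact h2u
        · rw [map_add, hd3, add_zero]; exact h3u
      have hdnot : ∀ d, d ∈ (ker ψ1 ⊓ ker ψ3 : Submodule F V) → d ≠ 0 →
          d ∉ span F {a1} ∧ d ∉ span F {a2} := by
        intro d hd hd0
        constructor
        · intro hmem
          obtain ⟨c, hc⟩ := mem_span_singleton.mp hmem
          have hc0 : c ≠ 0 := by rintro rfl; rw [← hc] at hd0; simp at hd0
          have := mem_of_smul_mem' hc0 (hc ▸ hd)
          exact h1a1 (mem_ker.mp (Submodule.mem_inf.mp this).1)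
        · intro hmem
          obtain ⟨c, hc⟩ := mem_span_singleton.mp hmem
          have hc0 : c ≠ 0 := by rintro rfl; rw [← hc] at hd0; simp at hd0
          have hmem' := mem_of_smul_mem' hc0 (hc ▸ hd)
          have : ψ1 a2 = 0 := mem_ker.mp (Submodule.mem_inf.mp hmem').1
          exact h2a2 (mem_ker.mp (hDk ▸ (mem_ker.mpr this)))
      by_cases m0 : u ∉ span F {a1} ∧ u ∉ span F {a2}
      · exact ⟨u, h1u, h2u, h3u, m0.1, m0.2⟩
      by_cases m1 : u + z1 ∉ span F {a1} ∧ u + z1 ∉ span F {a2}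
      · obtain ⟨g1, g2, g3⟩ := hgood z1 hz1K
        exact ⟨u + z1, g1, g2, g3, m1.1, m1.2⟩
      by_cases m2 : u + z2 ∉ span F {a1} ∧ u + z2 ∉ span F {a2}
      · obtain ⟨g1, g2, g3⟩ := hgood z2 hz2K
        exact ⟨u + z2, g1, g2, g3, m2.1, m2.2⟩
      exfalso
      have m0' : u ∈ span F {a1} ∨ u ∈ span F {a2} := by
        by_contra hcon
        push_neg at hcon
        exact m0 hcon
      have m1' : u + z1 ∈ span F {a1} ∨ u + z1 ∈ span F {a2} := by
        by_contra hcon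
        push_neg at hcon
        exact m1 hcon
      have m2' : u + z2 ∈ span F {a1} ∨ u + z2 ∈ span F {a2} := by
        by_contra hcon
        push_neg at hcon
        exact m2 hcon
      have hz21 : z2 - z1 ∈ (ker ψ1 ⊓ ker ψ3 : Submodule F V) := sub_mem hz2K hz1K
      have hz210 : z2 - z1 ≠ 0 := by
        intro h
        apply hz2l
        rw [sub_eq_zero.mp h]
        exact mem_span_singleton_self z1
      rcases m0' with h0 | h0 <;> rcases m1' with h1 | h1 <;> rcases m2' with h2 | h2
      · exact (hdnot z1 hz1K hz10).1 (by have := Submodule.sub_mem _ h1 h0; simpa using this)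
      · exact (hdnot z1 hz1K hz10).1 (by have := Submodule.sub_mem _ h1 h0; simpa using this)
      · exact (hdnot z2 hz2K hz20).1 (by have := Submodule.sub_mem _ h2 h0; simpa using this)
      · exact (hdnot (z2 - z1) hz21 hz210).2 (by have := Submodule.sub_mem _ h2 h1; simpa using this)
      · exact (hdnot (z2 - z1) hz21 hz210).1 (by have := Submodule.sub_mem _ h2 h1; simpa using this)
      · exact (hdnot z2 hz2K hz20).2 (by have := Submodule.sub_mem _ h2 h0; simpa using this)
      · exact (hdnot z1 hz1K hz10).2 (by have := Submodule.sub_mem _ h1 h0; simpa using this)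
      · exact (hdnot z1 hz1K hz10).2 (by have := Submodule.sub_mem _ h1 h0; simpa using this)
    · -- ψ2 a1 = 0
      have hauto : ∀ v : V, ψ2 v ≠ 0 → v ∉ span F {a1} := fun v hv =>
        notMem_span_of_apply_ne hDi hv
      have hfr : 1 ≤ finrank F ((ker ψ1 ⊓ ker ψ2) ⊓ ker ψ3 : Submodule F V) := by
        have i1 := finrank_inf_ge (ker ψ1) (ker ψ2)
        have i2 := finrank_inf_ge (ker ψ1 ⊓ ker ψ2) (ker ψ3)
        omega
      obtain ⟨z, hzK, hz0⟩ := exists_ne_zero_of_finrank hfr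
      have hz1 : ψ1 z = 0 := mem_ker.mp (Submodule.mem_inf.mp (Submodule.mem_inf.mp hzK).1).1
      have hz2 : ψ2 z = 0 := mem_ker.mp (Submodule.mem_inf.mp (Submodule.mem_inf.mp hzK).1).2
      have hz3 : ψ3 z = 0 := mem_ker.mp (Submodule.mem_inf.mp hzK).2
      by_cases hua2 : u ∈ span F {a2}
      · have hψ2v : ψ2 (u + z) ≠ 0 := by rw [map_add, hz2, add_zero]; exact h2u
        have hnot2 : u + z ∉ span F {a2} := by
          intro h
          have hzm : z ∈ span F {a2} := by
            have := Submodule.sub_mem _ h hua2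
            simpa using this
          obtain ⟨c, hc⟩ := mem_span_singleton.mp hzm
          have hc0 : c ≠ 0 := by rintro rfl; rw [← hc] at hz0; simp at hz0
          have := mem_of_smul_mem' hc0 (hc ▸ hzK)
          exact h2a2 (mem_ker.mp (Submodule.mem_inf.mp (Submodule.mem_inf.mp this).1).2)
        refine ⟨u + z, ?_, hψ2v, ?_, hauto _ hψ2v, hnot2⟩
        · rw [map_add, hz1, add_zero]; exact h1u
        · rw [map_add, hz3, add_zero]; exact h3u
      · exact ⟨u, h1u, h2u, h3u, hauto u h2u, hua2⟩

end LemV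

section Core

set_option linter.unusedSectionVars false
set_option maxHeartbeats 1000000

variable {F : Type*} [Field F] {V : Type*} [AddCommGroup V] [Module F V] [FiniteDimensional F V]

open Module Submodule LinearMap

lemma coreMain (hn : 3 ≤ finrank F V) (hcard : 3 ≤ Cardinal.mk F ∨ 4 ≤ finrank F V)
    (w v1 v2 : V) (φ1 φ2 : Module.Dual F V) (hw0 : w ≠ 0)
    (h11 : φ1 v1 ≠ 0) (h22 : φ2 v2 ≠ 0)
    (hv1w : v1 ∉ span F {w}) (hv2w : v2 ∉ span F {w})
    (hD : span F {v1} = span F {v2} ∨ ker φ1 = ker φ2 ∨ φ2 v1 = 0) :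
    ∃ (v' : V) (φ' : Module.Dual F V), φ' w = 0 ∧ φ' v1 ≠ 0 ∧ φ' v2 ≠ 0 ∧ φ' v' ≠ 0 ∧
      φ1 v' ≠ 0 ∧ φ2 v' ≠ 0 ∧ v' ∉ span F {v1} ∧ v' ∉ span F {v2} ∧
      ker φ' ≠ ker φ1 ∧ ker φ' ≠ ker φ2 := by
  classical
  obtain ⟨φw, hφw⟩ : ∃ φ : Module.Dual F V, φ w ≠ 0 := by
    by_contra h
    push_neg at h
    exact hw0 ((Module.forall_dual_apply_eq_zero_iff F w).mp h)
  set ew : Module.Dual F V →ₗ[F] F := LinearMap.applyₗ w with hew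
  have hewa : ∀ φ : Module.Dual F V, ew φ = φ w := fun φ => rfl
  set WD : Submodule F (Module.Dual F V) := ker ew with hWDdef
  have hmemWD : ∀ φ : Module.Dual F V, φ ∈ WD ↔ φ w = 0 := by
    intro φ
    rw [hWDdef, mem_ker, hewa]
  have hWDrank : finrank F WD + 1 = finrank F V := by
    have h := finrank_ker_funct (ψ := ew) (b := φw) (by rw [hewa]; exact hφw)
    rwa [Subspace.dual_finrank_eq] at h
  have hWD2 : 2 ≤ finrank F WD := by omega
  have hcard' : 3 ≤ Cardinal.mk F ∨ 3 ≤ finrank F WD := by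
    rcases hcard with h | h
    · exact Or.inl h
    · exact Or.inr (by omega)
  -- the "Z" submodules of WD
  let Zf : V → Submodule F WD := fun y => ker ((LinearMap.applyₗ (R := F) y).comp WD.subtype)
  have hZmem : ∀ (y : V) (φ : WD), φ ∈ Zf y ↔ (φ : Module.Dual F V) y = 0 := by
    intro y φ
    simp only [Zf, mem_ker, LinearMap.comp_apply]
    rfl
  have hZne : ∀ y : V, y ∉ span F {w} → Zf y ≠ ⊤ := by
    intro y hy htop
    obtain ⟨φ, hφ0, hφy⟩ := dual_sep y hy
    exact hφy ((hZmem y ⟨φ, (hmemWD φ).mpr hφ0⟩).mp (Submodule.eq_top_iff'.mp htop _))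
  -- generic consequences of a tool application
  rcases hD with hD1 | hD2 | hD3
  · -- Case D1 : span v1 = span v2
    obtain ⟨c2, hc2⟩ : ∃ c : F, c • v1 = v2 :=
      mem_span_singleton.mp (hD1 ▸ mem_span_singleton_self v2)
    have hc20 : c2 ≠ 0 := by
      rintro rfl
      rw [zero_smul] at hc2
      rw [← hc2] at h22
      simp at h22
    have h21 : φ2 v1 ≠ 0 := by
      intro h
      apply h22
      rw [← hc2, map_smul, h, smul_zero]
    set X1 : WD := if h : φ1 w = 0 then ⟨φ1, (hmemWD φ1).mpr h⟩ else 0 with hX1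
    set X2 : WD := if h : φ2 w = 0 then ⟨φ2, (hmemWD φ2).mpr h⟩ else 0 with hX2
    have hS2ne : span F {X1} ≠ ⊤ := line_ne_top hWD2 X1
    obtain ⟨φs, hφs1, hφsX1, hφsX2⟩ := tool hWD2 hcard' (hZne v1 hv1w) hS2ne X2
    set φ' : Module.Dual F V := (φs : Module.Dual F V) with hφ'
    have hφ'w : φ' w = 0 := (hmemWD φ').mp φs.2
    have hφ'v1 : φ' v1 ≠ 0 := fun h => hφs1 ((hZmem v1 φs).mpr h)
    have hφ'v2 : φ' v2 ≠ 0 := by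
      intro h
      apply hφ'v1
      have : φ' (c2 • v1) = 0 := hc2 ▸ h
      rw [map_smul, smul_eq_mul] at this
      exact (mul_eq_zero.mp this).resolve_left hc20
    have hkn1 : ker φ' ≠ ker φ1 := by
      by_cases hL1 : φ1 w = 0
      · intro hk
        obtain ⟨c, hφ'c⟩ := eq_smul_of_ker_le (b := v1) h11 hk.ge
        apply hφsX1
        rw [mem_span_singleton]
        refine ⟨c, Subtype.ext ?_⟩
        have hX1v : (X1 : Module.Dual F V) = φ1 := by rw [hX1, dif_pos hL1]
        rw [Submodule.coe_smul, hX1v, ← hφ'c]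
      · intro hk
        exact hL1 (by rw [← mem_ker, ← hk, mem_ker]; exact hφ'w)
    have hkn2 : ker φ' ≠ ker φ2 := by
      by_cases hL2 : φ2 w = 0
      · intro hk
        obtain ⟨c, hφ'c⟩ := eq_smul_of_ker_le (b := v2) h22 hk.ge
        apply hφsX2
        rw [mem_span_singleton]
        refine ⟨c, Subtype.ext ?_⟩
        have hX2v : (X2 : Module.Dual F V) = φ2 := by rw [hX2, dif_pos hL2]
        rw [Submodule.coe_smul, hX2v, ← hφ'c]
      · intro hk
        exact hL2 (by rw [← mem_ker, ← hk, mem_ker]; exact hφ'w)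
    obtain ⟨v', hV1, hV2, hV3, hVa1, hVa2⟩ :=
      lemV hn hcard φ1 φ2 φ' v1 v1 v2 h11 h21 hφ'v1 h11 h22 (Or.inl hD1)
    exact ⟨v', φ', hφ'w, hφ'v1, hφ'v2, hV3, hV1, hV2, hVa1, hVa2, hkn1, hkn2⟩
  · -- Case D2 : ker φ1 = ker φ2
    have h21 : φ2 v1 ≠ 0 := by
      intro h
      exact h11 (mem_ker.mp (hD2 ▸ (mem_ker.mpr h)))
    set X1 : WD := if h : φ1 w = 0 then ⟨φ1, (hmemWD φ1).mpr h⟩ else 0 with hX1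
    obtain ⟨φs, hφs1, hφs2, hφsX1⟩ := tool hWD2 hcard' (hZne v1 hv1w) (hZne v2 hv2w) X1
    set φ' : Module.Dual F V := (φs : Module.Dual F V) with hφ'
    have hφ'w : φ' w = 0 := (hmemWD φ').mp φs.2
    have hφ'v1 : φ' v1 ≠ 0 := fun h => hφs1 ((hZmem v1 φs).mpr h)
    have hφ'v2 : φ' v2 ≠ 0 := fun h => hφs2 ((hZmem v2 φs).mpr h)
    have hkn1 : ker φ' ≠ ker φ1 := by
      by_cases hL1 : φ1 w = 0
      · intro hk
        obtain ⟨c, hφ'c⟩ := eq_smul_of_ker_le (b := v1) h11 hk.ge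
        apply hφsX1
        rw [mem_span_singleton]
        refine ⟨c, Subtype.ext ?_⟩
        have hX1v : (X1 : Module.Dual F V) = φ1 := by rw [hX1, dif_pos hL1]
        rw [Submodule.coe_smul, hX1v, ← hφ'c]
      · intro hk
        exact hL1 (by rw [← mem_ker, ← hk, mem_ker]; exact hφ'w)
    have hkn2 : ker φ' ≠ ker φ2 := hD2 ▸ hkn1
    obtain ⟨v', hV1, hV2, hV3, hVa1, hVa2⟩ :=
      lemV hn hcard φ1 φ2 φ' v1 v1 v2 h11 h21 hφ'v1 h11 h22 (Or.inr (Or.inl hD2))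
    exact ⟨v', φ', hφ'w, hφ'v1, hφ'v2, hV3, hV1, hV2, hVa1, hVa2, hkn1, hkn2⟩
  · -- Case D3 : φ2 v1 = 0
    by_cases h12 : φ1 v2 = 0
    · -- CORNER case : φ2 v1 = 0 and φ1 v2 = 0
      set K12 : Submodule F V := ker φ1 ⊓ ker φ2 with hK12
      have hkk : ker φ1 ≠ ker φ2 := by
        intro h
        exact h11 (mem_ker.mp (h ▸ (mem_ker.mpr hD3)))
      have e1 := finrank_ker_funct h11
      have e2 := finrank_ker_funct h22
      have hsup : ker φ1 ⊔ ker φ2 = ⊤ := by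
        by_contra h
        have hlt : finrank F (ker φ1 ⊔ ker φ2 : Submodule F V) < finrank F V :=
          Submodule.finrank_lt (lt_top_iff_ne_top.mpr h).ne
        have hle : ker φ1 ≤ ker φ1 ⊔ ker φ2 := le_sup_left
        have heq : ker φ1 = ker φ1 ⊔ ker φ2 :=
          Submodule.eq_of_le_of_finrank_le hle (by omega)
        have h21le : ker φ2 ≤ ker φ1 := heq ▸ le_sup_right
        exact hkk (Submodule.eq_of_le_of_finrank_le h21le (by omega)).symm
      have eK : finrank F K12 + 2 = finrank F V := by
        have h := Submodule.finrank_sup_add_finrank_inf_eq (ker φ1) (ker φ2)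
        rw [hsup, finrank_top] at h
        rw [← hK12] at h
        omega
      set v0 : V := v1 + v2 with hv0
      have hφ1v0 : φ1 v0 = φ1 v1 := by rw [hv0, map_add, h12, add_zero]
      have hφ2v0 : φ2 v0 = φ2 v2 := by rw [hv0, map_add, hD3, zero_add]
      have hv0K : v0 ∉ K12 := by
        intro h
        exact h11 (hφ1v0 ▸ (mem_ker.mp (Submodule.mem_inf.mp h).1))
      have hv00 : v0 ≠ 0 := by
        intro h
        apply h11
        rw [← hφ1v0, h, map_zero]
      set M : Submodule F V := K12 ⊔ span F {v0} with hM
      have eM : finrank F M + 1 = finrank F V := by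
        have hinf : K12 ⊓ span F {v0} = ⊥ := by
          rw [eq_bot_iff]
          rintro z hz
          obtain ⟨hz1, hz2⟩ := Submodule.mem_inf.mp hz
          obtain ⟨c, hc⟩ := mem_span_singleton.mp hz2
          rw [Submodule.mem_bot]
          rcases eq_or_ne c 0 with rfl | hc0
          · rw [← hc, zero_smul]
          · exact absurd (mem_of_smul_mem' hc0 (hc ▸ hz1)) hv0K
        have h := Submodule.finrank_sup_add_finrank_inf_eq K12 (span F {v0})
        rw [hinf, finrank_bot, finrank_span_singleton hv00] at h
        rw [← hM] at h
        omega
      obtain ⟨φM, bM, hbM, hφMker⟩ := hyp_funct M eM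
      set XM : WD := if h : φM w = 0 then ⟨φM, (hmemWD φM).mpr h⟩ else 0 with hXM
      obtain ⟨φs, hφs1, hφs2, hφsX⟩ := tool hWD2 hcard' (hZne v1 hv1w) (hZne v2 hv2w) XM
      set φ' : Module.Dual F V := (φs : Module.Dual F V) with hφ'
      have hφ'w : φ' w = 0 := (hmemWD φ').mp φs.2
      have hφ'v1 : φ' v1 ≠ 0 := fun h => hφs1 ((hZmem v1 φs).mpr h)
      have hφ'v2 : φ' v2 ≠ 0 := fun h => hφs2 ((hZmem v2 φs).mpr h)
      have hkn1 : ker φ' ≠ ker φ1 := by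
        intro hk
        obtain ⟨c, hφ'c⟩ := eq_smul_of_ker_le (b := v1) h11 hk.ge
        apply hφ'v2
        rw [hφ'c]
        simp [h12]
      have hkn2 : ker φ' ≠ ker φ2 := by
        intro hk
        obtain ⟨c, hφ'c⟩ := eq_smul_of_ker_le (b := v2) h22 hk.ge
        apply hφ'v1
        rw [hφ'c]
        simp [hD3]
      have hx0 : ∃ x0 ∈ K12, φ' (v0 + x0) ≠ 0 := by
        by_contra h
        push_neg at h
        have hv0' : φ' v0 = 0 := by
          have := h 0 (zero_mem _)
          rwa [add_zero] at this
        have hMle : M ≤ ker φ' := by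
          rw [hM]
          refine sup_le ?_ ?_
          · intro z hz
            rw [mem_ker]
            have hz0 := h z hz
            rw [map_add, hv0'] at hz0
            rwa [zero_add] at hz0
          · rw [span_singleton_le_iff_mem]
            exact mem_ker.mpr hv0'
        obtain ⟨c, hc⟩ := eq_smul_of_ker_le (b := bM) hbM (hφMker ▸ hMle : ker φM ≤ ker φ')
        have hc0 : c ≠ 0 := by
          rintro rfl
          apply hφ'v1
          rw [hc]
          simp
        have hφMw : φM w = 0 := by
          have hw' : φ' w = c * φM w := by rw [hc]; simp
          rw [hφ'w] at hw'
          exact (mul_eq_zero.mp hw'.symm).resolve_left hc0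
        apply hφsX
        rw [mem_span_singleton]
        refine ⟨c, Subtype.ext ?_⟩
        have hXMv : (XM : Module.Dual F V) = φM := by rw [hXM, dif_pos hφMw]
        rw [Submodule.coe_smul, hXMv, ← hc]
      obtain ⟨x0, hx0K, hx0ne⟩ := hx0
      have hx01 : φ1 x0 = 0 := mem_ker.mp (Submodule.mem_inf.mp hx0K).1
      have hx02 : φ2 x0 = 0 := mem_ker.mp (Submodule.mem_inf.mp hx0K).2
      have hf1 : φ1 (v0 + x0) ≠ 0 := by
        rw [map_add, hx01, add_zero, hφ1v0]
        exact h11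
      have hf2 : φ2 (v0 + x0) ≠ 0 := by
        rw [map_add, hx02, add_zero, hφ2v0]
        exact h22
      refine ⟨v0 + x0, φ', hφ'w, hφ'v1, hφ'v2, hx0ne, hf1, hf2, ?_, ?_, hkn1, hkn2⟩
      · exact notMem_span_of_apply_ne hD3 hf2
      · exact notMem_span_of_apply_ne h12 hf1
    · -- D3a : φ2 v1 = 0, φ1 v2 ≠ 0
      set X1 : WD := if h : φ1 w = 0 then ⟨φ1, (hmemWD φ1).mpr h⟩ else 0 with hX1
      obtain ⟨φs, hφs1, hφs2, hφsX1⟩ := tool hWD2 hcard' (hZne v1 hv1w) (hZne v2 hv2w) X1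
      set φ' : Module.Dual F V := (φs : Module.Dual F V) with hφ'
      have hφ'w : φ' w = 0 := (hmemWD φ').mp φs.2
      have hφ'v1 : φ' v1 ≠ 0 := fun h => hφs1 ((hZmem v1 φs).mpr h)
      have hφ'v2 : φ' v2 ≠ 0 := fun h => hφs2 ((hZmem v2 φs).mpr h)
      have hkn1 : ker φ' ≠ ker φ1 := by
        by_cases hL1 : φ1 w = 0
        · intro hk
          obtain ⟨c, hφ'c⟩ := eq_smul_of_ker_le (b := v1) h11 hk.ge
          apply hφsX1
          rw [mem_span_singleton]
          refine ⟨c, Subtype.ext ?_⟩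
          have hX1v : (X1 : Module.Dual F V) = φ1 := by rw [hX1, dif_pos hL1]
          rw [Submodule.coe_smul, hX1v, ← hφ'c]
        · intro hk
          exact hL1 (by rw [← mem_ker, ← hk, mem_ker]; exact hφ'w)
      have hkn2 : ker φ' ≠ ker φ2 := by
        intro hk
        obtain ⟨c, hφ'c⟩ := eq_smul_of_ker_le (b := v2) h22 hk.ge
        apply hφ'v1
        rw [hφ'c]
        simp [hD3]
      obtain ⟨v', hV1, hV2, hV3, hVa1, hVa2⟩ :=
        lemV hn hcard φ1 φ2 φ' v2 v1 v2 h12 h22 hφ'v2 h11 h22 (Or.inr (Or.inr hD3))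
      exact ⟨v', φ', hφ'w, hφ'v1, hφ'v2, hV3, hV1, hV2, hVa1, hVa2, hkn1, hkn2⟩

end Core

/-- A point-hyperplane anti-flag of `PG(n-1,F)`: a pair `(p, H)` where `p` is a point
(1-dimensional subspace of `F^n`), `H` is a hyperplane ((n-1)-dimensional subspace),
and `p` is not contained in `H`. -/
structure AntiFlag (F : Type*) [Field F] (n : ℕ) where
  pt : Submodule F (Fin n → F)
  hyp : Submodule F (Fin n → F)
  pt_rank : Module.finrank F pt = 1
  hyp_rank : Module.finrank F hyp = n - 1
  not_incident : ¬ pt ≤ hyp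

variable {F : Type*} [Field F] {n : ℕ}

/-- `A ~₁ B` : for some `j`, `p_j ⊆ H_{3-j}` and `p_{3-j} ⊄ H_j`. -/
def adj1 (A B : AntiFlag F n) : Prop :=
  A ≠ B ∧ ((A.pt ≤ B.hyp ∧ ¬ B.pt ≤ A.hyp) ∨ (B.pt ≤ A.hyp ∧ ¬ A.pt ≤ B.hyp))

/-- `A ~₂ B` : `p_1 ⊆ H_2` and `p_2 ⊆ H_1`. -/
def adj2 (A B : AntiFlag F n) : Prop :=
  A ≠ B ∧ A.pt ≤ B.hyp ∧ B.pt ≤ A.hyp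

/-- `A ~₃ B` : `p_1 = p_2` or `H_1 = H_2`. -/
def adj3 (A B : AntiFlag F n) : Prop :=
  A ≠ B ∧ (A.pt = B.pt ∨ A.hyp = B.hyp)

/-- `A ~₄ B` : `p_1 ≠ p_2`, `H_1 ≠ H_2`, `p_1 ⊄ H_2` and `p_2 ⊄ H_1`. -/
def adj4 (A B : AntiFlag F n) : Prop :=
  A ≠ B ∧ A.pt ≠ B.pt ∧ A.hyp ≠ B.hyp ∧ ¬ A.pt ≤ B.hyp ∧ ¬ B.pt ≤ A.hyp

/-- `𝒳^{~ᵢ}` : the set of anti-flags `i`-adjacent to every anti-flag of `𝒳`. -/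
def perpSet (adj : AntiFlag F n → AntiFlag F n → Prop) (X : Set (AntiFlag F n)) :
    Set (AntiFlag F n) := {B | ∀ A ∈ X, adj A B}

theorem stmt4 (hn : 3 ≤ n) (hcard : 3 ≤ Cardinal.mk F ∨ 4 ≤ n)
    (A1 A2 : AntiFlag F n) (hne : A1 ≠ A2) (hnot4 : ¬ adj4 A1 A2)
    (p : Submodule F (Fin n → F)) (hp : Module.finrank F p = 1)
    (hp1 : p ≠ A1.pt) (hp2 : p ≠ A2.pt) :
    ∃ B : AntiFlag F n, adj4 A1 B ∧ adj4 A2 B ∧ p ≤ B.hyp := by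
  classical
  have hfr : finrank F (Fin n → F) = n := Module.finrank_fin_fun F
  have hn' : 3 ≤ finrank F (Fin n → F) := by rw [hfr]; exact hn
  have hcard' : 3 ≤ Cardinal.mk F ∨ 4 ≤ finrank F (Fin n → F) := by
    rcases hcard with h | h
    · exact Or.inl h
    · exact Or.inr (by rw [hfr]; exact h)
  obtain ⟨v1, hv10, hA1pt⟩ := point_rep A1.pt_rank
  obtain ⟨v2, hv20, hA2pt⟩ := point_rep A2.pt_rank
  obtain ⟨w, hw0, hppt⟩ := point_rep hp
  obtain ⟨φ1, b1, hb1, hk1⟩ := hyp_funct A1.hyp (by rw [A1.hyp_rank, hfr]; omega)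
  obtain ⟨φ2, b2, hb2, hk2⟩ := hyp_funct A2.hyp (by rw [A2.hyp_rank, hfr]; omega)
  have h11 : φ1 v1 ≠ 0 := by
    intro h
    apply A1.not_incident
    rw [hA1pt, ← hk1, span_singleton_le_iff_mem]
    exact mem_ker.mpr h
  have h22 : φ2 v2 ≠ 0 := by
    intro h
    apply A2.not_incident
    rw [hA2pt, ← hk2, span_singleton_le_iff_mem]
    exact mem_ker.mpr h
  have hv1w : v1 ∉ span F {w} := by
    intro hmem
    exact hp1 (by rw [hppt, hA1pt]; exact (span_eq_of_mem' hmem hv10).symm)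
  have hv2w : v2 ∉ span F {w} := by
    intro hmem
    exact hp2 (by rw [hppt, hA2pt]; exact (span_eq_of_mem' hmem hv20).symm)
  have hD : span F {v1} = span F {v2} ∨ ker φ1 = ker φ2 ∨ φ2 v1 = 0 ∨ φ1 v2 = 0 := by
    by_cases h1 : A1.pt = A2.pt
    · left; rw [← hA1pt, ← hA2pt]; exact h1
    by_cases h2 : A1.hyp = A2.hyp
    · right; left; rw [hk1, hk2]; exact h2
    by_cases h3 : A1.pt ≤ A2.hyp
    · right; right; left
      have hm : v1 ∈ A2.hyp := h3 (hA1pt.symm ▸ mem_span_singleton_self v1)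
      rw [← hk2] at hm
      exact mem_ker.mp hm
    · right; right; right
      have h4 : A2.pt ≤ A1.hyp := by
        by_contra h4
        exact hnot4 ⟨hne, h1, h2, h3, h4⟩
      have hm : v2 ∈ A1.hyp := h4 (hA2pt.symm ▸ mem_span_singleton_self v2)
      rw [← hk1] at hm
      exact mem_ker.mp hm
  have key : ∃ (v' : Fin n → F) (φ' : Module.Dual F (Fin n → F)),
      φ' w = 0 ∧ φ' v1 ≠ 0 ∧ φ' v2 ≠ 0 ∧ φ' v' ≠ 0 ∧
      φ1 v' ≠ 0 ∧ φ2 v' ≠ 0 ∧ v' ∉ span F {v1} ∧ v' ∉ span F {v2} ∧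
      ker φ' ≠ ker φ1 ∧ ker φ' ≠ ker φ2 := by
    rcases hD with h | h | h | h
    · exact coreMain hn' hcard' w v1 v2 φ1 φ2 hw0 h11 h22 hv1w hv2w (Or.inl h)
    · exact coreMain hn' hcard' w v1 v2 φ1 φ2 hw0 h11 h22 hv1w hv2w (Or.inr (Or.inl h))
    · exact coreMain hn' hcard' w v1 v2 φ1 φ2 hw0 h11 h22 hv1w hv2w (Or.inr (Or.inr h))
    · obtain ⟨v', φ', c1, c2, c3, c4, c5, c6, c7, c8, c9, c10⟩ :=
        coreMain hn' hcard' w v2 v1 φ2 φ1 hw0 h22 h11 hv2w hv1w (Or.inr (Or.inr h))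
      exact ⟨v', φ', c1, c3, c2, c4, c6, c5, c8, c7, c10, c9⟩
  obtain ⟨v', φ', hφ'w, h1', h2', hvne, hφ1v', hφ2v', hnv1, hnv2, hkn1, hkn2⟩ := key
  have hv'0 : v' ≠ 0 := by
    intro h
    apply hvne
    rw [h, map_zero]
  have hkerrank : finrank F (ker φ') = n - 1 := by
    have := finrank_ker_funct hvne
    rw [hfr] at this
    omega
  refine ⟨⟨span F {v'}, ker φ', finrank_span_singleton hv'0, hkerrank, ?_⟩, ?_, ?_, ?_⟩
  · intro hle
    exact hvne (mem_ker.mp (hle (mem_span_singleton_self v')))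
  · -- adj4 A1 B
    have hptne : A1.pt ≠ span F {v'} := by
      intro h
      have hsp : span F ({v1} : Set (Fin n → F)) = span F {v'} := by rw [← hA1pt, h]
      exact hnv1 (hsp.symm ▸ mem_span_singleton_self v')
    refine ⟨fun h => hptne (congrArg AntiFlag.pt h), hptne, ?_, ?_, ?_⟩
    · intro h
      exact hkn1 (hk1.trans h).symm
    · intro hle
      exact h1' (mem_ker.mp (hle (hA1pt.symm ▸ mem_span_singleton_self v1)))
    · intro hle
      exact hφ1v' (mem_ker.mp (hk1.symm ▸ hle (mem_span_singleton_self v')))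
  · -- adj4 A2 B
    have hptne : A2.pt ≠ span F {v'} := by
      intro h
      have hsp : span F ({v2} : Set (Fin n → F)) = span F {v'} := by rw [← hA2pt, h]
      exact hnv2 (hsp.symm ▸ mem_span_singleton_self v')
    refine ⟨fun h => hptne (congrArg AntiFlag.pt h), hptne, ?_, ?_, ?_⟩
    · intro h
      exact hkn2 (hk2.trans h).symm
    · intro hle
      exact h2' (mem_ker.mp (hle (hA2pt.symm ▸ mem_span_singleton_self v2)))
    · intro hle
      exact hφ2v' (mem_ker.mp (hk2.symm ▸ hle (mem_span_singleton_self v')))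
  · rw [hppt, span_singleton_le_iff_mem]
    exact mem_ker.mpr hφ'w
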